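/- Let (X,·) be a quasigroup satisfying the right Bol identity E25: x·((y·z)·y) = ((x·y)·z)·y for all x,y,z ∈ X. Let ∂₂ : ℤ[X × X] → ℤ[X] be the group homomorphism from the free abelian group on X × X to the free abelian group on X determined by ∂₂(a,b) = a + b − a·b, and for x,y,z ∈ X set ∂₃(x,y,z) = (y,z) + (yz,y) + (x,(yz)y) − (x,y) − (xy,z) − ((xy)z,y) ∈ ℤ[X × X]. Then ∂₂(∂₃(x,y,z)) = 0 for all x,y,z ∈ X; that is, with the substitution t = s = 1 the boundary maps form a chain complex. -/
import Mathlib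

open FreeAbelianGroup

/-- For a quasigroup satisfying the right Bol identity E25, the boundary maps
`∂₂(a,b) = a + b − ab` (substitution `t = s = 1`) and the E25 boundary `∂₃`
compose to zero: `∂₂ ∘ ∂₃ = 0`. -/
theorem rightBol_boundary_squared_zero {X : Type*} [Mul X]
    (hl : ∀ a b : X, ∃! x : X, a * x = b)
    (hr : ∀ a b : X, ∃! y : X, y * a = b)
    (hE25 : ∀ x y z : X, x * ((y * z) * y) = ((x * y) * z) * y)
    (d2 : FreeAbelianGroup (X × X) →+ FreeAbelianGroup X)
    (hd2 : ∀ a b : X, d2 (of (a, b)) = of a + of b - of (a * b)) :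
    ∀ x y z : X,
      d2 (of (y, z) + of (y * z, y) + of (x, (y * z) * y)
          - of (x, y) - of (x * y, z) - of ((x * y) * z, y)) = 0 := by
  intro x y z
  simp only [map_add, map_sub, hd2, hE25]
  abel
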